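/- Let A ∈ ℝ^{3×3} be invertible with SVD A = UΣVᵀ, singular values σ₁ ≥ σ₂ ≥ σ₃ > 0. Define R = UVᵀ if det(A) > 0, and R = U·diag(1,1,−1)·Vᵀ otherwise. Then R ∈ SO(3), and R minimizes ‖A − Q‖_F over all Q ∈ SO(3). -/

import Mathlib

open Matrix

/-- Frobenius norm of a real square matrix. -/
noncomputable def frobNorm {n : ℕ} (A : Matrix (Fin n) (Fin n) ℝ) : ℝ :=
  Real.sqrt (∑ i, ∑ j, (A i j) ^ 2)


lemma dot_mulVec_self {n : ℕ} (W : Matrix (Fin n) (Fin n) ℝ)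
    (hW : Wᵀ * W = 1) (x : Fin n → ℝ) :
    W.mulVec x ⬝ᵥ W.mulVec x = x ⬝ᵥ x := by
  rw [Matrix.dotProduct_mulVec, ← Matrix.mulVec_transpose, Matrix.mulVec_mulVec, hW,
    Matrix.one_mulVec]

lemma trace_le_one_of_neg_det (W : Matrix (Fin 3) (Fin 3) ℝ)
    (hW : Wᵀ * W = 1) (hWd : W.det = -1) : W.trace ≤ 1 := by
  have hdetT : Wᵀ.det = -1 := by rw [Matrix.det_transpose]; exact hWd
  have hsing : (W + 1).det = 0 := by
    have h2 : Wᵀ * (W + 1) = 1 + Wᵀ := by rw [Matrix.mul_add, hW, mul_one, add_comm]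
    have h3 := congrArg Matrix.det h2
    rw [Matrix.det_mul, hdetT] at h3
    have h4 : (1 + Wᵀ).det = (W + 1).det := by
      rw [← Matrix.det_transpose (1 + Wᵀ)]
      simp [Matrix.transpose_add, add_comm]
    rw [h4] at h3
    linarith
  obtain ⟨v, hv0, hv⟩ := (Matrix.exists_mulVec_eq_zero_iff).2 hsing
  rw [Matrix.add_mulVec, Matrix.one_mulVec] at hv
  have hWv : W.mulVec v = -v := eq_neg_of_add_eq_zero_left hv
  have hc : (0:ℝ) < v ⬝ᵥ v := by
    rcases Function.ne_iff.1 hv0 with ⟨i, hi⟩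
    have h1 : (0:ℝ) < v i * v i := mul_self_pos.2 hi
    have h2 : ∀ j, (0:ℝ) ≤ v j * v j := fun j => mul_self_nonneg _
    exact lt_of_lt_of_le h1 (Finset.single_le_sum (fun j _ => h2 j) (Finset.mem_univ i))
  set s : ℝ := Real.sqrt (v ⬝ᵥ v) with hs
  have hspos : 0 < s := Real.sqrt_pos.2 hc
  have hss : s * s = v ⬝ᵥ v := Real.mul_self_sqrt hc.le
  set u : Fin 3 → ℝ := s⁻¹ • v with hudef
  have huu : u ⬝ᵥ u = 1 := by
    have h : u ⬝ᵥ u = s⁻¹ * (s⁻¹ * (v ⬝ᵥ v)) := by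
      simp [hudef, smul_dotProduct, dotProduct_smul]
    rw [h, ← hss]
    field_simp
  have hWu : W.mulVec u = -u := by
    rw [hudef, Matrix.mulVec_smul, hWv, smul_neg]
  set P : Matrix (Fin 3) (Fin 3) ℝ := 1 - vecMulVec u u with hP
  have hPsymm : ∀ i j, P i j = P j i := by
    intro i j
    simp [hP, Matrix.vecMulVec_apply, Matrix.one_apply, mul_comm, eq_comm]
  have hNN : vecMulVec u u * vecMulVec u u = vecMulVec u u := by
    ext i j
    simp only [Matrix.mul_apply, Matrix.vecMulVec_apply]
    calc ∑ k, u i * u k * (u k * u j) = (u i * u j) * ∑ k, u k * u k := by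
          rw [Finset.mul_sum]; exact Finset.sum_congr rfl fun k _ => by ring
      _ = u i * u j := by rw [show (∑ k, u k * u k) = u ⬝ᵥ u from rfl, huu, mul_one]
  have hPP : P * P = P := by
    rw [hP, Matrix.sub_mul, Matrix.mul_sub, Matrix.mul_sub, Matrix.one_mul, Matrix.mul_one, hNN]
    rw [Matrix.one_mul]
    abel
  have htrN : (vecMulVec u u).trace = 1 := by
    rw [show (vecMulVec u u).trace = ∑ i, u i * u i from by
      simp [Matrix.trace, Matrix.diag, Matrix.vecMulVec_apply]]
    exact huu
  have htrP : P.trace = 2 := by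
    rw [hP, Matrix.trace_sub, Matrix.trace_one, htrN]
    norm_num
  have htrWN : (W * vecMulVec u u).trace = -1 := by
    have h : (W * vecMulVec u u).trace = (W.mulVec u) ⬝ᵥ u := by
      simp only [Matrix.trace, Matrix.diag, Matrix.mul_apply, Matrix.vecMulVec_apply,
        dotProduct, Matrix.mulVec]
      refine Finset.sum_congr rfl fun i _ => ?_
      rw [Finset.sum_mul]
      exact Finset.sum_congr rfl fun k _ => by ring
    rw [h, hWu, neg_dotProduct, huu]
  have htrWP : (W * P).trace = W.trace + 1 := by
    rw [hP, Matrix.mul_sub, Matrix.mul_one, Matrix.trace_sub, htrWN]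
    ring
  have hdiag : ∀ i, (P * (W * P)) i i ≤ P i i := by
    intro i
    set p : Fin 3 → ℝ := fun k => P k i with hpdef
    have hform : (P * (W * P)) i i = p ⬝ᵥ W.mulVec p := by
      simp only [Matrix.mul_apply, dotProduct, Matrix.mulVec, hpdef]
      exact Finset.sum_congr rfl fun k _ => by rw [hPsymm i k]
    have hcs : (p ⬝ᵥ W.mulVec p) ^ 2 ≤ (p ⬝ᵥ p) * (W.mulVec p ⬝ᵥ W.mulVec p) := by
      have h := Finset.sum_mul_sq_le_sq_mul_sq Finset.univ p (W.mulVec p)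
      calc (p ⬝ᵥ W.mulVec p) ^ 2 = (∑ k, p k * W.mulVec p k) ^ 2 := rfl
        _ ≤ (∑ k, p k ^ 2) * ∑ k, W.mulVec p k ^ 2 := h
        _ = (p ⬝ᵥ p) * (W.mulVec p ⬝ᵥ W.mulVec p) := by
            simp [dotProduct, sq]
    rw [dot_mulVec_self W hW] at hcs
    have hpp : p ⬝ᵥ p = P i i := by
      calc p ⬝ᵥ p = ∑ k, P i k * P k i :=
            Finset.sum_congr rfl fun k _ => by rw [hpdef]; rw [hPsymm i k]
        _ = (P * P) i i := (Matrix.mul_apply).symm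
        _ = P i i := by rw [hPP]
    have hppnn : 0 ≤ p ⬝ᵥ p := Finset.sum_nonneg fun k _ => mul_self_nonneg _
    rw [hform]
    nlinarith [hcs, hpp, hppnn]
  have key : (W * P).trace ≤ 2 := by
    have h1 : (W * P).trace = (P * (W * P)).trace := by
      conv_lhs => rw [show W * P = W * P * P from by rw [Matrix.mul_assoc, hPP],
        Matrix.trace_mul_comm]
    calc (W * P).trace = ∑ i, (P * (W * P)) i i := by
          rw [h1]; rfl
      _ ≤ ∑ i, P i i := Finset.sum_le_sum fun i _ => hdiag i
      _ = 2 := htrP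
  linarith

lemma diag_entry_le_one (W : Matrix (Fin 3) (Fin 3) ℝ) (hW : Wᵀ * W = 1) (i : Fin 3) :
    W i i ≤ 1 := by
  have h1 : ∑ j, W j i * W j i = 1 := by
    have := congrArg (fun M => M i i) hW
    simpa [Matrix.mul_apply, Matrix.one_apply] using this
  have h2 : W i i * W i i ≤ 1 :=
    h1 ▸ Finset.single_le_sum (fun j _ => mul_self_nonneg (W j i)) (Finset.mem_univ i)
  nlinarith

lemma trace_diag_mul_le (σ : Fin 3 → ℝ) (hσpos : ∀ i, 0 < σ i) (hσdec : Antitone σ)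
    (W : Matrix (Fin 3) (Fin 3) ℝ) (hW : Wᵀ * W = 1) :
    ((W.det = 1 → (Matrix.diagonal σ * W).trace ≤ σ 0 + σ 1 + σ 2) ∧
     (W.det = -1 → (Matrix.diagonal σ * W).trace ≤ σ 0 + σ 1 - σ 2)) := by
  have htr : (Matrix.diagonal σ * W).trace = σ 0 * W 0 0 + σ 1 * W 1 1 + σ 2 * W 2 2 := by
    simp [Matrix.trace, Matrix.diag, Matrix.mul_apply, Matrix.diagonal_apply,
      Fin.sum_univ_three]
  have h0 := diag_entry_le_one W hW 0
  have h1 := diag_entry_le_one W hW 1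
  have h2 := diag_entry_le_one W hW 2
  have hd01 : σ 1 ≤ σ 0 := hσdec (by decide : (0 : Fin 3) ≤ 1)
  have hd12 : σ 2 ≤ σ 1 := hσdec (by decide : (1 : Fin 3) ≤ 2)
  have hp0 := hσpos 0
  have hp1 := hσpos 1
  have hp2 := hσpos 2
  constructor
  · intro _
    rw [htr]
    nlinarith [mul_nonneg hp0.le (sub_nonneg.2 h0), mul_nonneg hp1.le (sub_nonneg.2 h1),
      mul_nonneg hp2.le (sub_nonneg.2 h2)]
  · intro hdet
    have htrW := trace_le_one_of_neg_det W hW hdet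
    have htrW' : W 0 0 + W 1 1 + W 2 2 ≤ 1 := by
      simpa [Matrix.trace, Matrix.diag, Fin.sum_univ_three] using htrW
    rw [htr]
    nlinarith [mul_nonneg (sub_nonneg.2 hd12) (by linarith : (0:ℝ) ≤ 2 - W 0 0 - W 1 1),
      mul_nonneg (sub_nonneg.2 hd01) (sub_nonneg.2 h0),
      mul_nonneg hp2.le (by linarith : (0:ℝ) ≤ 1 - (W 0 0 + W 1 1 + W 2 2))]

lemma frob_sq_expand (A Q : Matrix (Fin 3) (Fin 3) ℝ) (hQ : Qᵀ * Q = 1) :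
    ∑ i, ∑ j, (A - Q) i j ^ 2
      = (∑ i, ∑ j, A i j ^ 2) + 3 - 2 * (Aᵀ * Q).trace := by
  have hQ3 : ∑ i, ∑ j, Q i j ^ 2 = 3 := by
    have h := congrArg Matrix.trace hQ
    rw [Matrix.trace_one] at h
    have h2 : (Qᵀ * Q).trace = ∑ i, ∑ j, Q j i ^ 2 := by
      simp [Matrix.trace, Matrix.diag, Matrix.mul_apply, sq]
    rw [h2] at h
    rw [Finset.sum_comm]
    simpa using h
  have htr : (Aᵀ * Q).trace = ∑ i, ∑ j, A i j * Q i j := by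
    simp only [Matrix.trace, Matrix.diag, Matrix.mul_apply, Matrix.transpose_apply]
    rw [Finset.sum_comm]
  have hexp : ∑ i, ∑ j, (A - Q) i j ^ 2
      = (∑ i, ∑ j, A i j ^ 2) - 2 * (∑ i, ∑ j, A i j * Q i j) + ∑ i, ∑ j, Q i j ^ 2 := by
    rw [Finset.mul_sum, ← Finset.sum_sub_distrib, ← Finset.sum_add_distrib]
    refine Finset.sum_congr rfl fun i _ => ?_
    rw [Finset.mul_sum, ← Finset.sum_sub_distrib, ← Finset.sum_add_distrib]
    refine Finset.sum_congr rfl fun j _ => ?_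
    simp only [Matrix.sub_apply]
    ring
  rw [hexp, htr, hQ3]
  ring

lemma orth_tt (U : Matrix (Fin 3) (Fin 3) ℝ) (hU : U ∈ Matrix.orthogonalGroup (Fin 3) ℝ) :
    Uᵀ * U = 1 ∧ U * Uᵀ = 1 := by
  have h1 := (Matrix.mem_orthogonalGroup_iff (Fin 3) ℝ).1 hU
  have h2 := (Matrix.mem_orthogonalGroup_iff' (Fin 3) ℝ).1 hU
  have hstar : star U = Uᵀ := by ext i j; simp [Matrix.star_apply]
  exact ⟨h2, h1⟩

/-- For an invertible `A ∈ ℝ^{3×3}` with SVD `A = UΣVᵀ`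
(`σ₁ ≥ σ₂ ≥ σ₃ > 0`), the matrix `R = UVᵀ` if `det A > 0` and
`R = U·diag(1,1,−1)·Vᵀ` otherwise lies in `SO(3)` and minimizes `‖A − Q‖_F`
over `Q ∈ SO(3)`. -/
theorem svd_special_orthogonal_projection
    (A U V : Matrix (Fin 3) (Fin 3) ℝ) (σ : Fin 3 → ℝ)
    (hA_inv : IsUnit A)
    (hU : U ∈ Matrix.orthogonalGroup (Fin 3) ℝ)
    (hV : V ∈ Matrix.orthogonalGroup (Fin 3) ℝ)
    (hσpos : ∀ i, 0 < σ i) (hσdec : Antitone σ)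
    (hA : A = U * Matrix.diagonal σ * Vᵀ)
    (R : Matrix (Fin 3) (Fin 3) ℝ)
    (hR : R = if 0 < A.det then U * Vᵀ else U * Matrix.diagonal ![1, 1, -1] * Vᵀ) :
    R ∈ Matrix.specialOrthogonalGroup (Fin 3) ℝ ∧
      ∀ Q ∈ Matrix.specialOrthogonalGroup (Fin 3) ℝ,
        frobNorm (A - R) ≤ frobNorm (A - Q) := by
  obtain ⟨hUtU, hUUt⟩ := orth_tt U hU
  obtain ⟨hVtV, hVVt⟩ := orth_tt V hV
  -- determinant facts
  have hdetU2 : U.det * U.det = 1 := by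
    have := congrArg Matrix.det hUtU
    rwa [Matrix.det_mul, Matrix.det_transpose, Matrix.det_one] at this
  have hdetV2 : V.det * V.det = 1 := by
    have := congrArg Matrix.det hVtV
    rwa [Matrix.det_mul, Matrix.det_transpose, Matrix.det_one] at this
  have hUV2 : (U.det * V.det) * (U.det * V.det) = 1 := by
    calc (U.det * V.det) * (U.det * V.det) = (U.det * U.det) * (V.det * V.det) := by ring
      _ = 1 := by rw [hdetU2, hdetV2, mul_one]
  have hprod : 0 < ∏ i, σ i := Finset.prod_pos fun i _ => hσpos i
  have hdetA : A.det = U.det * V.det * ∏ i, σ i := by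
    rw [hA, Matrix.det_mul, Matrix.det_mul, Matrix.det_diagonal, Matrix.det_transpose]
    ring
  have hdetAne : A.det ≠ 0 := by
    intro h
    have := hA_inv
    rw [Matrix.isUnit_iff_isUnit_det, h] at this
    simpa using this
  -- Aᵀ structure
  have hAT : Aᵀ = V * (Matrix.diagonal σ * Uᵀ) := by
    rw [hA]
    simp [Matrix.transpose_mul, Matrix.diagonal_transpose, Matrix.mul_assoc]
  -- the D matrix
  set D : Matrix (Fin 3) (Fin 3) ℝ :=
    if 0 < A.det then 1 else Matrix.diagonal ![1, 1, -1] with hD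
  have hRD : R = U * D * Vᵀ := by
    rw [hR, hD]
    by_cases h : 0 < A.det <;> simp [h]
  have hDT : Dᵀ = D := by
    rw [hD]; by_cases h : 0 < A.det <;> simp [h, Matrix.diagonal_transpose]
  have hDD : D * D = 1 := by
    rw [hD]; by_cases h : 0 < A.det <;> simp [h, Matrix.diagonal_mul_diagonal]
    · rw [show (fun i => (![1, 1, -1] : Fin 3 → ℝ) i * ![1, 1, -1] i) = fun _ => (1:ℝ) from by
        funext i; fin_cases i <;> norm_num]
      rfl
  have hdetD : D.det = if 0 < A.det then 1 else -1 := by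
    rw [hD]; by_cases h : 0 < A.det <;> simp [h, Matrix.det_diagonal, Fin.prod_univ_three]
  have hsign : U.det * V.det = if 0 < A.det then 1 else -1 := by
    by_cases h : 0 < A.det <;> simp only [h, if_true, if_false]
    · rcases mul_self_eq_one_iff.1 hUV2 with h1 | h1
      · exact h1
      · exfalso; rw [hdetA, h1] at h; nlinarith
    · rcases mul_self_eq_one_iff.1 hUV2 with h1 | h1
      · exfalso
        have hlt : A.det < 0 := lt_of_le_of_ne (not_lt.1 h) hdetAne
        rw [hdetA, h1] at hlt; nlinarith
      · exact h1
  -- R is special orthogonal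
  have hRtR : Rᵀ * R = 1 := by
    rw [hRD]
    have hT : (U * D * Vᵀ)ᵀ = V * (Dᵀ * Uᵀ) := by
      simp [Matrix.transpose_mul, Matrix.mul_assoc]
    rw [hT, hDT]
    calc V * (D * Uᵀ) * (U * D * Vᵀ) = V * (D * ((Uᵀ * U) * (D * Vᵀ))) := by
          simp only [Matrix.mul_assoc]
      _ = V * ((D * D) * Vᵀ) := by rw [hUtU, Matrix.one_mul, ← Matrix.mul_assoc D D]
      _ = 1 := by rw [hDD, Matrix.one_mul, hVVt]
  have hdetR : R.det = 1 := by
    rw [hRD, Matrix.det_mul, Matrix.det_mul, Matrix.det_transpose, hdetD]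
    by_cases h : 0 < A.det <;> simp only [h, if_true, if_false]
    · have := hsign; rw [if_pos h] at this
      calc U.det * 1 * V.det = U.det * V.det := by ring
        _ = 1 := this
    · have := hsign; rw [if_neg h] at this
      calc U.det * -1 * V.det = -(U.det * V.det) := by ring
        _ = 1 := by rw [this]; ring
  have hRmem : R ∈ Matrix.specialOrthogonalGroup (Fin 3) ℝ := by
    rw [Matrix.mem_specialOrthogonalGroup_iff]
    refine ⟨(Matrix.mem_orthogonalGroup_iff' (Fin 3) ℝ).2 ?_, hdetR⟩
    have hstar : star R = Rᵀ := by ext i j; simp [Matrix.star_apply]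
    exact hRtR
  refine ⟨hRmem, ?_⟩
  -- minimization
  intro Q hQ
  obtain ⟨hQorth, hQdet⟩ := Matrix.mem_specialOrthogonalGroup_iff.1 hQ
  obtain ⟨hQtQ, hQQt⟩ := orth_tt Q hQorth
  -- trace of Aᵀ R
  have htrR : (Aᵀ * R).trace = (Matrix.diagonal σ * D).trace := by
    rw [hAT, hRD]
    calc (V * (Matrix.diagonal σ * Uᵀ) * (U * D * Vᵀ)).trace
        = (V * (Matrix.diagonal σ * ((Uᵀ * U) * (D * Vᵀ)))).trace := by
          simp only [Matrix.mul_assoc]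
      _ = ((Matrix.diagonal σ * (D * Vᵀ)) * V).trace := by
          rw [hUtU, Matrix.one_mul, Matrix.trace_mul_comm]
      _ = (Matrix.diagonal σ * (D * (Vᵀ * V))).trace := by simp only [Matrix.mul_assoc]
      _ = (Matrix.diagonal σ * D).trace := by rw [hVtV, Matrix.mul_one]
  -- W for Q
  set W : Matrix (Fin 3) (Fin 3) ℝ := Uᵀ * Q * V with hWdef
  have hWT : Wᵀ = Vᵀ * (Qᵀ * U) := by
    rw [hWdef]; simp [Matrix.transpose_mul, Matrix.mul_assoc]
  have hWtW : Wᵀ * W = 1 := by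
    rw [hWT, hWdef]
    calc Vᵀ * (Qᵀ * U) * (Uᵀ * Q * V) = Vᵀ * (Qᵀ * ((U * Uᵀ) * (Q * V))) := by
          simp only [Matrix.mul_assoc]
      _ = Vᵀ * ((Qᵀ * Q) * V) := by rw [hUUt, Matrix.one_mul, ← Matrix.mul_assoc Qᵀ Q]
      _ = 1 := by rw [hQtQ, Matrix.one_mul, hVtV]
  have hdetW : W.det = U.det * V.det := by
    rw [hWdef, Matrix.det_mul, Matrix.det_mul, Matrix.det_transpose, hQdet]
    ring
  have htrQ : (Aᵀ * Q).trace = (Matrix.diagonal σ * W).trace := by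
    rw [hAT, hWdef]
    calc (V * (Matrix.diagonal σ * Uᵀ) * Q).trace
        = (V * (Matrix.diagonal σ * (Uᵀ * Q))).trace := by simp only [Matrix.mul_assoc]
      _ = ((Matrix.diagonal σ * (Uᵀ * Q)) * V).trace := by rw [Matrix.trace_mul_comm]
      _ = (Matrix.diagonal σ * (Uᵀ * Q * V)).trace := by simp only [Matrix.mul_assoc]
  -- trace values for D
  have htrD : (Matrix.diagonal σ * D).trace
      = if 0 < A.det then σ 0 + σ 1 + σ 2 else σ 0 + σ 1 - σ 2 := by
    rw [hD]
    by_cases h : 0 < A.det <;>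
      simp [h, Matrix.diagonal_mul_diagonal, Matrix.trace_diagonal, Fin.sum_univ_three]
    ring
  -- key inequality
  have hkey : (Aᵀ * Q).trace ≤ (Aᵀ * R).trace := by
    rw [htrQ, htrR, htrD]
    obtain ⟨k1, k2⟩ := trace_diag_mul_le σ hσpos hσdec W hWtW
    by_cases h : 0 < A.det <;> simp only [h, if_true, if_false]
    · exact k1 (by rw [hdetW, hsign, if_pos h])
    · exact k2 (by rw [hdetW, hsign, if_neg h])
  -- conclude
  unfold frobNorm
  apply Real.sqrt_le_sqrt
  rw [frob_sq_expand A R hRtR, frob_sq_expand A Q hQtQ]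
  linarith
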